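/- Let L be a countable first-order language containing a binary relation symbol E, and let T be an L-theory. Call an extension N of a substructure M an 'end extension' if for all a ∈ M and b ∈ N, if N ⊨ b E a then b ∈ M. Assume that every countable model of T has a proper countable elementary end extension. Then every countable model of T has an elementary end extension N which is ℵ₁-like, i.e., N has cardinality ℵ₁ but for every a ∈ N the set {b ∈ N : N ⊨ b E a} is countable. -/

import Mathlib

open FirstOrder Language Structure Set Cardinal

namespace KeislerAux

noncomputable section

/-- A fixed carrier type of cardinality `ℵ₁`. -/
def Om : Type := (Cardinal.aleph 1).out

lemma mk_Om : #Om = Cardinal.aleph 1 := Cardinal.mk_out _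

variable (L : FirstOrder.Language.{0,0})

/-- A "stage": a set in `Om` together with structure data on it. -/
structure PreS where
  car : Set Om
  fn : ∀ (n : ℕ), L.Functions n → (Fin n → Om) → Om
  rl : ∀ (n : ℕ), L.Relations n → (Fin n → Om) → Prop
  closed : ∀ (n : ℕ) (F : L.Functions n) (x : Fin n → Om), (∀ i, x i ∈ car) → fn n F x ∈ car
  nonemp : car.Nonempty

variable {L}

instance carStr (s : PreS L) : L.Structure s.car where
  funMap {n} F x := ⟨s.fn n F (fun i => (x i : Om)), s.closed n F _ (fun i => (x i).2)⟩
  RelMap {n} r x := s.rl n r (fun i => (x i : Om))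

lemma carStr_funMap (s : PreS L) {n} (F : L.Functions n) (x : Fin n → s.car) :
    ((funMap F x : s.car) : Om) = s.fn n F (fun i => (x i : Om)) := rfl

lemma carStr_relMap (s : PreS L) {n} (r : L.Relations n) (x : Fin n → s.car) :
    RelMap r x ↔ s.rl n r (fun i => (x i : Om)) := Iff.rfl

variable (L) in
/-- The stage obtained by transporting a structure `N` along an injection into `Om`. -/
def ofEmb (N : Type) [L.Structure N] [Nonempty N] (g : N → Om) (_hg : Function.Injective g) :
    PreS L where
  car := Set.range g
  fn n F x := @dite _ (∀ i, ∃ m, g m = x i) (Classical.dec _)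
    (fun h => g (funMap F fun i => (h i).choose)) (fun _ => g (Classical.arbitrary N))
  rl n r x := ∃ h : ∀ i, ∃ m, g m = x i, RelMap r fun i => (h i).choose
  closed n F x _ := by
    by_cases h : ∀ i, ∃ m, g m = x i
    · rw [dif_pos h]; exact mem_range_self _
    · rw [dif_neg h]; exact mem_range_self _
  nonemp := ⟨g (Classical.arbitrary N), mem_range_self _⟩

variable {N : Type} [L.Structure N] [Nonempty N] {g : N → Om} (hg : Function.Injective g)

lemma ofEmb_car : (ofEmb L N g hg).car = Set.range g := rfl

lemma ofEmb_fn {n} (F : L.Functions n) (w : Fin n → N) :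
    (ofEmb L N g hg).fn n F (fun i => g (w i)) = g (funMap F w) := by
  have h : ∀ i, ∃ m, g m = g (w i) := fun i => ⟨w i, rfl⟩
  simp only [ofEmb]
  rw [dif_pos h]
  have : (fun i => (h i).choose) = w := funext fun i => hg (h i).choose_spec
  rw [this]

lemma ofEmb_rl {n} (r : L.Relations n) (w : Fin n → N) :
    (ofEmb L N g hg).rl n r (fun i => g (w i)) ↔ RelMap r w := by
  simp only [ofEmb]
  constructor
  · rintro ⟨h, hr⟩
    have : (fun i => (h i).choose) = w := funext fun i => hg (h i).choose_spec
    rwa [this] at hr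
  · intro hr
    refine ⟨fun i => ⟨w i, rfl⟩, ?_⟩
    have : (fun i => (Exists.choose (⟨w i, rfl⟩ : ∃ m, g m = g (w i)))) = w :=
      funext fun i => hg (Exists.choose_spec (⟨w i, rfl⟩ : ∃ m, g m = g (w i)))
    rwa [this]

/-- The canonical isomorphism from `N` onto the transported stage. -/
def ofEmbEquiv : N ≃[L] (ofEmb L N g hg).car where
  toEquiv := Equiv.ofInjective g hg
  map_fun' {n} F x := by
    apply Subtype.ext
    have h1 : ∀ a : N, ((Equiv.ofInjective g hg) a : Om) = g a := fun a => by simp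
    rw [carStr_funMap]
    simp only [Function.comp_def, h1]
    exact (ofEmb_fn hg F x).symm
  map_rel' {n} r x := by
    have h1 : ∀ a : N, ((Equiv.ofInjective g hg) a : Om) = g a := fun a => by simp
    rw [carStr_relMap]
    simp only [Function.comp_def, h1]
    exact ofEmb_rl hg r x

lemma ofEmbEquiv_coe (a : N) : ((ofEmbEquiv hg a : (ofEmb L N g hg).car) : Om) = g a := by
  show ((Equiv.ofInjective g hg) a : Om) = g a
  simp

/-- Elementary inclusion of stages. -/
structure Elem (s t : PreS L) : Prop where
  sub : s.car ⊆ t.car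
  fn_eq : ∀ (n : ℕ) (F : L.Functions n) (x : Fin n → Om), (∀ i, x i ∈ s.car) →
    t.fn n F x = s.fn n F x
  rl_iff : ∀ (n : ℕ) (r : L.Relations n) (x : Fin n → Om), (∀ i, x i ∈ s.car) →
    (t.rl n r x ↔ s.rl n r x)
  frm : ∀ {γ : Type} {k : ℕ} (φ : L.BoundedFormula γ k) (v : γ → s.car) (xs : Fin k → s.car),
    φ.Realize (fun i => (⟨(v i : Om), sub (v i).2⟩ : t.car))
      (fun i => (⟨(xs i : Om), sub (xs i).2⟩ : t.car)) ↔ φ.Realize v xs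

protected lemma Elem.refl (s : PreS L) : Elem s s where
  sub := subset_rfl
  fn_eq _ _ _ _ := rfl
  rl_iff _ _ _ _ := Iff.rfl
  frm _ _ _ := Iff.rfl

protected lemma Elem.trans {s t u : PreS L} (h1 : Elem s t) (h2 : Elem t u) : Elem s u where
  sub := h1.sub.trans h2.sub
  fn_eq n F x hx := by
    rw [h2.fn_eq n F x (fun i => h1.sub (hx i)), h1.fn_eq n F x hx]
  rl_iff n r x hx := (h2.rl_iff n r x (fun i => h1.sub (hx i))).trans (h1.rl_iff n r x hx)
  frm φ v xs := by
    have h := h2.frm φ (fun i => ⟨(v i : Om), h1.sub (v i).2⟩)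
      (fun i => ⟨(xs i : Om), h1.sub (xs i).2⟩)
    rw [h1.frm] at h
    exact h

lemma Elem.realize_formula {s t : PreS L} (h : Elem s t) {γ : Type} (φ : L.Formula γ)
    (v : γ → s.car) :
    φ.Realize (fun i => (⟨(v i : Om), h.sub (v i).2⟩ : t.car)) ↔ φ.Realize v := by
  rw [Formula.Realize, Formula.Realize]
  have h2 := h.frm φ v default
  convert h2 using 2

/-- The elementary embedding associated to an elementary stage inclusion. -/
def Elem.emb {s t : PreS L} (h : Elem s t) : (s.car : Type) ↪ₑ[L] (t.car : Type) where
  toFun := fun x => ⟨(x : Om), h.sub x.2⟩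
  map_formula' := fun _ φ x => h.realize_formula φ x

lemma Elem.realize_sentence {s t : PreS L} (h : Elem s t) (φ : L.Sentence) :
    (t.car : Type) ⊨ φ ↔ (s.car : Type) ⊨ φ := by
  rw [Sentence.Realize, Sentence.Realize, ← h.realize_formula φ default]
  constructor
  · intro hh
    convert hh using 2
  · intro hh
    convert hh using 2

lemma Elem.model_T {T : L.Theory} {s t : PreS L} (h : Elem s t) (hT : T.Model (s.car : Type)) :
    T.Model (t.car : Type) :=
  (Theory.model_iff T).mpr fun φ hφ =>
    (h.realize_sentence φ).mpr ((Theory.model_iff T).mp hT φ hφ)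

lemma realize_term_incl {s t : PreS L} (hsub : s.car ⊆ t.car)
    (hfn : ∀ (n : ℕ) (F : L.Functions n) (x : Fin n → Om), (∀ i, x i ∈ s.car) →
      t.fn n F x = s.fn n F x)
    {γ : Type} (tm : L.Term γ) (v : γ → s.car) :
    ((tm.realize (fun i => (⟨(v i : Om), hsub (v i).2⟩ : t.car)) : t.car) : Om)
      = ((tm.realize v : s.car) : Om) := by
  induction tm with
  | var i => rfl
  | func F ts ihts =>
    show ((funMap F _ : t.car) : Om) = ((funMap F _ : s.car) : Om)
    rw [carStr_funMap, carStr_funMap]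
    have : (fun i => ((Term.realize (fun i => (⟨(v i : Om), hsub (v i).2⟩ : t.car)) (ts i) : t.car)
        : Om)) = fun i => ((Term.realize v (ts i) : s.car) : Om) := funext fun i => ihts i
    rw [this]
    exact hfn _ F _ (fun i => (Term.realize v (ts i)).2)

lemma snoc_incl {s t : PreS L} (hsub : s.car ⊆ t.car) {k : ℕ} (xs : Fin k → s.car) (b : s.car) :
    (fun i => (⟨((Fin.snoc xs b : Fin (k+1) → s.car) i : Om),
        hsub ((Fin.snoc xs b : Fin (k+1) → s.car) i).2⟩ : t.car))
      = Fin.snoc (fun i => (⟨(xs i : Om), hsub (xs i).2⟩ : t.car)) ⟨(b : Om), hsub b.2⟩ := by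
  funext i
  refine Fin.lastCases ?_ (fun j => ?_) i
  · apply Subtype.ext
    simp [Fin.snoc_last]
  · apply Subtype.ext
    simp [Fin.snoc_castSucc]

variable (L) in
/-- Union stage at a limit ordinal. -/
def limitStage (α : Ordinal) (h0 : 0 < α) (ih : ∀ β < α, PreS L) : PreS L where
  car := ⋃ (β : Ordinal), ⋃ (hβ : β < α), (ih β hβ).car
  fn n F x := @dite _ (∃ β, ∃ hβ : β < α, ∀ i, x i ∈ (ih β hβ).car) (Classical.dec _)
    (fun h => (ih h.choose h.choose_spec.choose).fn n F x)
    (fun _ => (ih 0 h0).nonemp.choose)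
  rl n r x := ∃ β, ∃ hβ : β < α, (∀ i, x i ∈ (ih β hβ).car) ∧ (ih β hβ).rl n r x
  closed n F x _ := by
    by_cases h : ∃ β, ∃ hβ : β < α, ∀ i, x i ∈ (ih β hβ).car
    · rw [dif_pos h]
      exact mem_iUnion₂.mpr ⟨h.choose, h.choose_spec.choose,
        (ih _ _).closed n F x h.choose_spec.choose_spec⟩
    · rw [dif_neg h]
      exact mem_iUnion₂.mpr ⟨0, h0, (ih 0 h0).nonemp.choose_spec⟩
  nonemp := ⟨(ih 0 h0).nonemp.choose, mem_iUnion₂.mpr ⟨0, h0, (ih 0 h0).nonemp.choose_spec⟩⟩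

variable {α : Ordinal} {h0 : 0 < α} {ih : ∀ β < α, PreS L}

lemma limitStage_car_sub (β : Ordinal) (hβ : β < α) :
    (ih β hβ).car ⊆ (limitStage L α h0 ih).car :=
  fun x hx => mem_iUnion₂.mpr ⟨β, hβ, hx⟩

lemma limitStage_mem {x : Om} (hx : x ∈ (limitStage L α h0 ih).car) :
    ∃ β, ∃ hβ : β < α, x ∈ (ih β hβ).car :=
  mem_iUnion₂.mp hx

lemma limitStage_fn
    (pw : ∀ (β γ : Ordinal) (hβ : β < α) (hγ : γ < α), β ≤ γ → Elem (ih β hβ) (ih γ hγ))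
    (β : Ordinal) (hβ : β < α) (n : ℕ) (F : L.Functions n) (x : Fin n → Om)
    (hx : ∀ i, x i ∈ (ih β hβ).car) :
    (limitStage L α h0 ih).fn n F x = (ih β hβ).fn n F x := by
  have h : ∃ β, ∃ hβ : β < α, ∀ i, x i ∈ (ih β hβ).car := ⟨β, hβ, hx⟩
  show @dite Om (∃ β, ∃ hβ : β < α, ∀ i, x i ∈ (ih β hβ).car) (Classical.dec _)
    (fun h => (ih h.choose h.choose_spec.choose).fn n F x)
    (fun _ => (ih 0 h0).nonemp.choose) = _
  rw [dif_pos h]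
  have hδ : max β h.choose < α := max_lt hβ h.choose_spec.choose
  rw [← (pw h.choose (max β h.choose) h.choose_spec.choose hδ (le_max_right _ _)).fn_eq n F x
      h.choose_spec.choose_spec,
    (pw β (max β h.choose) hβ hδ (le_max_left _ _)).fn_eq n F x hx]

lemma limitStage_rl
    (pw : ∀ (β γ : Ordinal) (hβ : β < α) (hγ : γ < α), β ≤ γ → Elem (ih β hβ) (ih γ hγ))
    (β : Ordinal) (hβ : β < α) (n : ℕ) (r : L.Relations n) (x : Fin n → Om)
    (hx : ∀ i, x i ∈ (ih β hβ).car) :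
    (limitStage L α h0 ih).rl n r x ↔ (ih β hβ).rl n r x := by
  constructor
  · rintro ⟨γ, hγ, hxγ, hr⟩
    have hδ : max β γ < α := max_lt hβ hγ
    exact ((pw β _ hβ hδ (le_max_left _ _)).rl_iff n r x hx).mp
      (((pw γ _ hγ hδ (le_max_right _ _)).rl_iff n r x hxγ).mpr hr)
  · intro hr
    exact ⟨β, hβ, hx, hr⟩

lemma limitStage_frm
    (pw : ∀ (β γ : Ordinal) (hβ : β < α) (hγ : γ < α), β ≤ γ → Elem (ih β hβ) (ih γ hγ))
    {γ : Type} {k : ℕ} (φ : L.BoundedFormula γ k) :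
    ∀ (β : Ordinal) (hβ : β < α) (v : γ → (ih β hβ).car) (xs : Fin k → (ih β hβ).car),
    φ.Realize
      (fun i => (⟨((v i : (ih β hβ).car) : Om),
        limitStage_car_sub β hβ (v i).2⟩ : (limitStage L α h0 ih).car))
      (fun i => (⟨((xs i : (ih β hβ).car) : Om),
        limitStage_car_sub β hβ (xs i).2⟩ : (limitStage L α h0 ih).car))
      ↔ φ.Realize v xs := by
  induction φ with
  | falsum => exact fun β hβ v xs => Iff.rfl
  | @equal m t1 t2 =>
    intro β hβ v xs
    show (Term.realize _ t1 = Term.realize _ t2) ↔ (Term.realize _ t1 = Term.realize _ t2)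
    have he : (Sum.elim
        (fun i => (⟨((v i : (ih β hβ).car) : Om),
          limitStage_car_sub β hβ (v i).2⟩ : (limitStage L α h0 ih).car))
        (fun i => (⟨((xs i : (ih β hβ).car) : Om),
          limitStage_car_sub β hβ (xs i).2⟩ : (limitStage L α h0 ih).car)))
        = fun j => (⟨((Sum.elim v xs j : (ih β hβ).car) : Om),
          limitStage_car_sub β hβ (Sum.elim v xs j).2⟩ : (limitStage L α h0 ih).car) := by
      funext j
      cases j <;> rfl
    rw [he, Subtype.ext_iff, Subtype.ext_iff,
      realize_term_incl (limitStage_car_sub β hβ) (limitStage_fn pw β hβ) t1,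
      realize_term_incl (limitStage_car_sub β hβ) (limitStage_fn pw β hβ) t2]
  | @rel m n r ts =>
    intro β hβ v xs
    show RelMap r _ ↔ RelMap r _
    have he : (Sum.elim
        (fun i => (⟨((v i : (ih β hβ).car) : Om),
          limitStage_car_sub β hβ (v i).2⟩ : (limitStage L α h0 ih).car))
        (fun i => (⟨((xs i : (ih β hβ).car) : Om),
          limitStage_car_sub β hβ (xs i).2⟩ : (limitStage L α h0 ih).car)))
        = fun j => (⟨((Sum.elim v xs j : (ih β hβ).car) : Om),
          limitStage_car_sub β hβ (Sum.elim v xs j).2⟩ : (limitStage L α h0 ih).car) := by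
      funext j
      cases j <;> rfl
    rw [he, carStr_relMap, carStr_relMap]
    have he2 : (fun i => ((Term.realize (fun j => (⟨((Sum.elim v xs j : (ih β hβ).car) : Om),
          limitStage_car_sub β hβ (Sum.elim v xs j).2⟩ : (limitStage L α h0 ih).car)) (ts i)
        : (limitStage L α h0 ih).car) : Om))
        = fun i => ((Term.realize (Sum.elim v xs) (ts i) : (ih β hβ).car) : Om) :=
      funext fun i => realize_term_incl (limitStage_car_sub β hβ) (limitStage_fn pw β hβ) (ts i) _
    rw [he2]
    exact limitStage_rl pw β hβ n r _ (fun i => (Term.realize (Sum.elim v xs) (ts i)).2)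
  | @imp m f1 f2 ih1 ih2 =>
    intro β hβ v xs
    exact imp_congr (ih1 β hβ v xs) (ih2 β hβ v xs)
  | @all m f ihf =>
    intro β hβ v xs
    show (∀ a : (limitStage L α h0 ih).car, f.Realize _ (Fin.snoc _ a))
      ↔ (∀ b : (ih β hβ).car, f.Realize v (Fin.snoc xs b))
    constructor
    · intro h b
      have hb := h ⟨(b : Om), limitStage_car_sub β hβ b.2⟩
      rw [← snoc_incl (limitStage_car_sub β hβ) xs b] at hb
      exact (ihf β hβ v (Fin.snoc xs b)).mp hb
    · intro h a
      obtain ⟨δ0, hδ0, ha⟩ := limitStage_mem a.2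
      have hδ : max β δ0 < α := max_lt hβ hδ0
      have hβδ : Elem (ih β hβ) (ih (max β δ0) hδ) := pw β _ hβ hδ (le_max_left _ _)
      have hδ0δ : Elem (ih δ0 hδ0) (ih (max β δ0) hδ) := pw δ0 _ hδ0 hδ (le_max_right _ _)
      set u := ih (max β δ0) hδ with hu
      let b : u.car := ⟨(a : Om), hδ0δ.sub ha⟩
      let v' : γ → u.car := fun i => ⟨(v i : Om), hβδ.sub (v i).2⟩
      let xs' : Fin m → u.car := fun i => ⟨(xs i : Om), hβδ.sub (xs i).2⟩
      have hall : (BoundedFormula.all f).Realize v' xs' :=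
        (hβδ.frm (BoundedFormula.all f) v xs).mpr h
      have hf : f.Realize v' (Fin.snoc xs' b) := hall b
      have h2 := (ihf (max β δ0) hδ v' (Fin.snoc xs' b)).mpr hf
      rw [snoc_incl (limitStage_car_sub (max β δ0) hδ) xs' b] at h2
      have hva : (fun i => (⟨((v' i : u.car) : Om),
            limitStage_car_sub (max β δ0) hδ (v' i).2⟩ : (limitStage L α h0 ih).car))
          = fun i => (⟨((v i : (ih β hβ).car) : Om),
            limitStage_car_sub β hβ (v i).2⟩ : (limitStage L α h0 ih).car) :=
        funext fun i => Subtype.ext rfl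
      have hxa : (Fin.snoc (fun i => (⟨((xs' i : u.car) : Om),
            limitStage_car_sub (max β δ0) hδ (xs' i).2⟩ : (limitStage L α h0 ih).car))
            (⟨(b : Om), limitStage_car_sub (max β δ0) hδ b.2⟩ : (limitStage L α h0 ih).car))
          = (Fin.snoc (fun i => (⟨((xs i : (ih β hβ).car) : Om),
            limitStage_car_sub β hβ (xs i).2⟩ : (limitStage L α h0 ih).car)) a
            : Fin (m+1) → (limitStage L α h0 ih).car) := by
        funext i
        refine Fin.lastCases ?_ (fun j => ?_) i
        · apply Subtype.ext
          simp only [Fin.snoc_last]; rfl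
        · apply Subtype.ext
          simp only [Fin.snoc_castSucc]; rfl
      rw [hva, hxa] at h2
      exact h2

lemma limitStage_elem
    (pw : ∀ (β γ : Ordinal) (hβ : β < α) (hγ : γ < α), β ≤ γ → Elem (ih β hβ) (ih γ hγ))
    (β : Ordinal) (hβ : β < α) : Elem (ih β hβ) (limitStage L α h0 ih) where
  sub := limitStage_car_sub β hβ
  fn_eq n F x hx := limitStage_fn pw β hβ n F x hx
  rl_iff n r x hx := limitStage_rl pw β hβ n r x hx
  frm φ v xs := limitStage_frm pw φ β hβ v xs

section Succ

variable (T : L.Theory) (e : L.Relations 2)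
variable (H : ∀ M : T.ModelType, Countable M →
      ∃ (N : T.ModelType) (f : M ↪ₑ[L] N), Countable N ∧
        ¬ Function.Surjective f ∧
        ∀ (a : M) (b : (N : Type)), RelMap e ![b, f a] → ∃ a' : M, f a' = b)

/-- The invariant needed to run the successor step. -/
def Inv (s : PreS L) : Prop := Countable (s.car : Type) ∧ T.Model (s.car : Type)

/-- The bundled model at a stage satisfying the invariant. -/
@[reducible] def MT (s : PreS L) (h : Inv T s) : T.ModelType :=
  @Theory.ModelType.mk L T (s.car : Type) (carStr s) h.2 s.nonemp.to_subtype

variable {T}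

/-- The chosen proper elementary end extension. -/
def NN (s : PreS L) (h : Inv T s) : T.ModelType := (H (MT T s h) h.1).choose

/-- The chosen elementary embedding into the end extension. -/
def ff (s : PreS L) (h : Inv T s) : (MT T s h : Type) ↪ₑ[L] ((NN e H s h : Type)) :=
  (H (MT T s h) h.1).choose_spec.choose

lemma NN_countable (s : PreS L) (h : Inv T s) : Countable (NN e H s h : Type) :=
  (H (MT T s h) h.1).choose_spec.choose_spec.1

lemma ff_not_surj (s : PreS L) (h : Inv T s) : ¬ Function.Surjective (ff e H s h) :=
  (H (MT T s h) h.1).choose_spec.choose_spec.2.1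

lemma ff_end (s : PreS L) (h : Inv T s) :
    ∀ (a : (MT T s h : Type)) (b : (NN e H s h : Type)),
      RelMap e ![b, ff e H s h a] → ∃ a' : (MT T s h : Type), ff e H s h a' = b :=
  (H (MT T s h) h.1).choose_spec.choose_spec.2.2

lemma exists_j (s : PreS L) (h : Inv T s) :
    Nonempty ((((Set.range ⇑(ff e H s h))ᶜ : Set (NN e H s h : Type)) : Type)
      ↪ ((s.carᶜ : Set Om) : Type)) := by
  rw [← Cardinal.le_def]
  haveI := NN_countable e H s h
  have h1 : #(((Set.range ⇑(ff e H s h))ᶜ : Set (NN e H s h : Type)) : Type) ≤ ℵ₀ :=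
    mk_le_aleph0
  have h2 : ℵ₀ ≤ #((s.carᶜ : Set Om) : Type) := by
    by_contra hc
    push_neg at hc
    have hsum : #(s.car : Type) + #((s.carᶜ : Set Om) : Type) = #Om := mk_sum_compl s.car
    have hle : #Om ≤ ℵ₀ + ℵ₀ := by
      rw [← hsum]
      exact add_le_add (by haveI := h.1; exact mk_le_aleph0) hc.le
    rw [Cardinal.aleph0_add_aleph0, mk_Om] at hle
    exact absurd hle (not_le.mpr aleph0_lt_aleph_one)
  exact h1.trans h2


/-- The chosen fresh-elements injection. -/
def jj (s : PreS L) (h : Inv T s) :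
    (((Set.range ⇑(ff e H s h))ᶜ : Set (NN e H s h : Type)) : Type)
      ↪ ((s.carᶜ : Set Om) : Type) :=
  (exists_j e H s h).some

/-- The injection of the end extension into `Om`, extending the inclusion of `s.car`. -/
def gg (s : PreS L) (h : Inv T s) : ↥(NN e H s h) → Om := fun x =>
  @dite _ (x ∈ Set.range ⇑(ff e H s h)) (Classical.dec _)
    (fun hx => (((Equiv.ofInjective _ (ff e H s h).injective).symm ⟨x, hx⟩ : (s.car : Type)) : Om))
    (fun hx => ((jj e H s h ⟨x, hx⟩ : (s.carᶜ : Set Om)) : Om))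

lemma gg_ff (s : PreS L) (h : Inv T s) (a : (s.car : Type)) :
    gg e H s h (ff e H s h a) = (a : Om) := by
  have hx : ff e H s h a ∈ Set.range ⇑(ff e H s h) := ⟨a, rfl⟩
  show @dite _ _ (Classical.dec _) _ _ = _
  rw [dif_pos hx]
  congr 1
  exact Equiv.ofInjective_symm_apply (ff e H s h).injective a

lemma gg_mem (s : PreS L) (h : Inv T s) {x : (NN e H s h : Type)}
    (hx : x ∈ Set.range ⇑(ff e H s h)) : gg e H s h x ∈ s.car := by
  show @dite _ _ (Classical.dec _) _ _ ∈ s.car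
  rw [dif_pos hx]
  exact Subtype.mem _

lemma gg_not_mem (s : PreS L) (h : Inv T s) {x : (NN e H s h : Type)}
    (hx : ¬ x ∈ Set.range ⇑(ff e H s h)) : gg e H s h x ∉ s.car := by
  show ¬ @dite _ _ (Classical.dec _) _ _ ∈ s.car
  rw [dif_neg hx]
  exact (jj e H s h ⟨x, hx⟩).2

lemma gg_inj (s : PreS L) (h : Inv T s) : Function.Injective (gg e H s h) := by
  intro x y hxy
  by_cases hx : x ∈ Set.range ⇑(ff e H s h) <;> by_cases hy : y ∈ Set.range ⇑(ff e H s h)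
  · have hxy' : (((Equiv.ofInjective _ (ff e H s h).injective).symm ⟨x, hx⟩ : (s.car : Type)) : Om)
        = (((Equiv.ofInjective _ (ff e H s h).injective).symm ⟨y, hy⟩ : (s.car : Type)) : Om) := by
      rwa [show gg e H s h x = _ from dif_pos hx, show gg e H s h y = _ from dif_pos hy] at hxy
    have := (Equiv.ofInjective _ (ff e H s h).injective).symm.injective
      (Subtype.coe_injective hxy')
    exact Subtype.mk_eq_mk.mp this
  · exact absurd (gg_mem e H s h hx) (hxy ▸ gg_not_mem e H s h hy)
  · exact absurd (gg_mem e H s h hy) (hxy ▸ gg_not_mem e H s h hx)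
  · have hxy' : ((jj e H s h ⟨x, hx⟩ : (s.carᶜ : Set Om)) : Om)
        = ((jj e H s h ⟨y, hy⟩ : (s.carᶜ : Set Om)) : Om) := by
      rwa [show gg e H s h x = _ from dif_neg hx, show gg e H s h y = _ from dif_neg hy] at hxy
    have := (jj e H s h).injective (Subtype.coe_injective hxy')
    exact Subtype.mk_eq_mk.mp this

/-- The successor stage. -/
def succStage (s : PreS L) : PreS L :=
  @dite _ (Inv T s) (Classical.dec _)
    (fun h => ofEmb L (NN e H s h : Type) (gg e H s h) (gg_inj e H s h))
    (fun _ => s)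

lemma succStage_eq {s : PreS L} (h : Inv T s) :
    succStage e H s = ofEmb L (NN e H s h : Type) (gg e H s h) (gg_inj e H s h) :=
  dif_pos h

lemma mem_succStage_sub {s : PreS L} (h : Inv T s) {x : Om} (hx : x ∈ s.car) :
    x ∈ (succStage e H s).car := by
  rw [succStage_eq e H h]
  exact ⟨ff e H s h ⟨x, hx⟩, gg_ff e H s h ⟨x, hx⟩⟩

lemma succ_elem_aux (s : PreS L) (h : Inv T s) :
    Elem s (ofEmb L (NN e H s h : Type) (gg e H s h) (gg_inj e H s h)) where
  sub := fun x hx => ⟨ff e H s h ⟨x, hx⟩, gg_ff e H s h ⟨x, hx⟩⟩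
  fn_eq n F x hx := by
    have hxw : x = fun i => gg e H s h (ff e H s h ⟨x i, hx i⟩) :=
      funext fun i => (gg_ff e H s h ⟨x i, hx i⟩).symm
    conv_lhs => rw [hxw]
    rw [ofEmb_fn (gg_inj e H s h) F,
      show (fun i => ff e H s h ⟨x i, hx i⟩)
        = ⇑(ff e H s h) ∘ (fun i => (⟨x i, hx i⟩ : (s.car : Type))) from rfl,
      ← (ff e H s h).map_fun F, gg_ff, carStr_funMap]
  rl_iff n r x hx := by
    have hxw : x = fun i => gg e H s h (ff e H s h ⟨x i, hx i⟩) :=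
      funext fun i => (gg_ff e H s h ⟨x i, hx i⟩).symm
    conv_lhs => rw [hxw]
    refine (ofEmb_rl (gg_inj e H s h) r (fun i => ff e H s h ⟨x i, hx i⟩)).trans ?_
    exact ((ff e H s h).map_rel r (fun i => (⟨x i, hx i⟩ : (s.car : Type)))).trans
      (carStr_relMap s r _)
  frm {γ} {k} φ v xs := by
    have hv : (fun i => (⟨(v i : Om), ⟨ff e H s h ⟨(v i : Om), (v i).2⟩,
          gg_ff e H s h ⟨(v i : Om), (v i).2⟩⟩⟩ :
          ((ofEmb L (NN e H s h : Type) (gg e H s h) (gg_inj e H s h)).car : Type)))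
        = ⇑(ofEmbEquiv (gg_inj e H s h)) ∘ (⇑(ff e H s h) ∘ v) :=
      funext fun i => Subtype.ext
        ((ofEmbEquiv_coe (gg_inj e H s h) (ff e H s h (v i))).trans
          (gg_ff e H s h (v i))).symm
    have hxs : (fun i => (⟨(xs i : Om), ⟨ff e H s h ⟨(xs i : Om), (xs i).2⟩,
          gg_ff e H s h ⟨(xs i : Om), (xs i).2⟩⟩⟩ :
          ((ofEmb L (NN e H s h : Type) (gg e H s h) (gg_inj e H s h)).car : Type)))
        = ⇑(ofEmbEquiv (gg_inj e H s h)) ∘ (⇑(ff e H s h) ∘ xs) :=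
      funext fun i => Subtype.ext
        ((ofEmbEquiv_coe (gg_inj e H s h) (ff e H s h (xs i))).trans
          (gg_ff e H s h (xs i))).symm
    rw [hv, hxs]
    exact (StrongHomClass.realize_boundedFormula (ofEmbEquiv (gg_inj e H s h)) φ).trans
      ((ff e H s h).map_boundedFormula φ v xs)

lemma succ_elem (s : PreS L) (h : Inv T s) : Elem s (succStage e H s) := by
  rw [succStage_eq e H h]
  exact succ_elem_aux e H s h

lemma succ_pred (s : PreS L) (h : Inv T s) :
    ∀ a ∈ s.car, ∀ b ∈ (succStage e H s).car,
      (succStage e H s).rl 2 e ![b, a] → b ∈ s.car := by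
  intro a ha b hb hr
  rw [succStage_eq e H h] at hb hr
  obtain ⟨nb, rfl⟩ := hb
  have hx : ![gg e H s h nb, a] = fun i => gg e H s h (![nb, ff e H s h ⟨a, ha⟩] i) := by
    funext i
    fin_cases i
    · rfl
    · exact (gg_ff e H s h ⟨a, ha⟩).symm
  rw [hx] at hr
  obtain ⟨a', ha'⟩ := ff_end e H s h ⟨a, ha⟩ nb
    ((ofEmb_rl (gg_inj e H s h) e ![nb, ff e H s h ⟨a, ha⟩]).mp hr)
  rw [← ha', gg_ff]
  exact a'.2

lemma succ_new (s : PreS L) (h : Inv T s) :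
    ∃ x, x ∈ (succStage e H s).car ∧ x ∉ s.car := by
  have h2 : ∃ b, b ∉ Set.range ⇑(ff e H s h) := by
    by_contra hc
    push_neg at hc
    exact ff_not_surj e H s h (fun b => hc b)
  obtain ⟨nb, hnb⟩ := h2
  exact ⟨gg e H s h nb, by rw [succStage_eq e H h]; exact mem_range_self _,
    gg_not_mem e H s h hnb⟩

end Succ


section Chain

variable (T : L.Theory) (e : L.Relations 2)
variable (H : ∀ M : T.ModelType, Countable M →
      ∃ (N : T.ModelType) (f : M ↪ₑ[L] N), Countable N ∧
        ¬ Function.Surjective f ∧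
        ∀ (a : M) (b : (N : Type)), RelMap e ![b, f a] → ∃ a' : M, f a' = b)
variable (M : T.ModelType) [Countable (M : Type)]

/-- An injection of `M` into `Om`. -/
def g0 : (M : Type) ↪ Om :=
  ((Cardinal.le_def _ _).mp
    (by rw [mk_Om]; exact mk_le_aleph0.trans aleph0_lt_aleph_one.le)).some

/-- Stage zero. -/
def base : PreS L := ofEmb L (M : Type) ⇑(g0 T M) (g0 T M).injective

lemma base_model : T.Model ((base T M).car : Type) :=
  ((ofEmbEquiv (g0 T M).injective).toElementaryEmbedding.theory_model_iff T).mp inferInstance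

lemma base_countable : (base T M).car.Countable := countable_range _

/-- The elementary chain. -/
def chain (α : Ordinal.{0}) : PreS L :=
  Ordinal.limitRecOn α (base T M) (fun _ s => succStage e H s)
    (fun α' hα' ihf => limitStage L α' hα'.pos ihf)

lemma chain_zero : chain T e H M 0 = base T M := Ordinal.limitRecOn_zero _ _ _

lemma chain_succ (α : Ordinal.{0}) :
    chain T e H M (Order.succ α) = succStage e H (chain T e H M α) :=
  Ordinal.limitRecOn_succ _ _ _ _

lemma chain_limit (α : Ordinal.{0}) (hα : Order.IsSuccLimit α) :
    chain T e H M α = limitStage L α hα.pos (fun β _ => chain T e H M β) :=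
  Ordinal.limitRecOn_limit _ _ _ _ hα

lemma card_le_of_lt_omega1 {α : Ordinal.{0}} (h : α < (Cardinal.aleph 1).ord) : α.card ≤ ℵ₀ := by
  have h2 := Cardinal.lt_ord.mp h
  rw [← Cardinal.succ_aleph0] at h2
  exact Order.lt_succ_iff.mp h2

lemma Iio_countable {α : Ordinal.{0}} (h : α < (Cardinal.aleph 1).ord) : (Iio α).Countable := by
  have h1 : #(Iio α) ≤ ℵ₀ := by
    rw [Ordinal.mk_Iio_ordinal]
    have h2 : Cardinal.lift.{1} α.card ≤ Cardinal.lift.{1} ℵ₀ :=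
      Cardinal.lift_le.mpr (card_le_of_lt_omega1 h)
    simpa using h2
  exact Cardinal.le_aleph0_iff_set_countable.mp h1

theorem chain_main : ∀ α : Ordinal.{0}, α ≤ (Cardinal.aleph 1).ord →
    ((α < (Cardinal.aleph 1).ord → (chain T e H M α).car.Countable) ∧
     (∀ β γ : Ordinal.{0}, β ≤ γ → γ ≤ α → Elem (chain T e H M β) (chain T e H M γ)) ∧
     (∀ β, β ≤ α → ∀ a ∈ (chain T e H M β).car, ∀ b ∈ (chain T e H M α).car,
        (chain T e H M α).rl 2 e ![b, a] → b ∈ (chain T e H M β).car)) := by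
  intro α
  induction α using Ordinal.limitRecOn with
  | zero =>
    intro _
    refine ⟨fun _ => ?_, ?_, ?_⟩
    · rw [chain_zero]
      exact base_countable T M
    · intro β γ hβγ hγ
      have hγ0 : γ = 0 := nonpos_iff_eq_zero.mp hγ
      have hβ0 : β = 0 := nonpos_iff_eq_zero.mp (hβγ.trans hγ)
      subst hγ0
      subst hβ0
      exact Elem.refl _
    · intro β hβ a _ b hb _
      have hβ0 : β = 0 := nonpos_iff_eq_zero.mp hβ
      subst hβ0
      exact hb
  | add_one α IH =>
    rw [Ordinal.add_one_eq_succ]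
    intro hs
    have hαlt : α < (Cardinal.aleph 1).ord := Order.succ_le_iff.mp hs
    obtain ⟨c1, c2, c3⟩ := IH hαlt.le
    have hcnt := c1 hαlt
    have hmod : T.Model (((chain T e H M α).car : Set Om) : Type) := by
      refine (c2 0 α zero_le le_rfl).model_T ?_
      rw [chain_zero]
      exact base_model T M
    have hInv : Inv T (chain T e H M α) := ⟨hcnt.to_subtype, hmod⟩
    have hEs : Elem (chain T e H M α) (chain T e H M (Order.succ α)) := by
      rw [chain_succ]
      exact succ_elem e H _ hInv
    refine ⟨fun _ => ?_, ?_, ?_⟩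
    · rw [chain_succ, succStage_eq e H hInv]
      haveI := NN_countable e H (chain T e H M α) hInv
      exact countable_range _
    · intro β γ hβγ hγ
      by_cases hγα : γ ≤ α
      · exact c2 β γ hβγ hγα
      · have hγs : γ = Order.succ α := le_antisymm hγ (Order.succ_le_of_lt (not_le.mp hγα))
        subst hγs
        by_cases hβα : β ≤ α
        · exact (c2 β α hβα le_rfl).trans hEs
        · have hβs : β = Order.succ α := le_antisymm hβγ (Order.succ_le_of_lt (not_le.mp hβα))
          subst hβs
          exact Elem.refl _
    · intro β hβ a ha b hb hr
      by_cases hβα : β ≤ α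
      · have haα : a ∈ (chain T e H M α).car := (c2 β α hβα le_rfl).sub ha
        rw [chain_succ] at hb hr
        have hbα : b ∈ (chain T e H M α).car := succ_pred e H _ hInv a haα b hb hr
        have hmem : ∀ i, ![b, a] i ∈ (chain T e H M α).car := by
          intro i
          fin_cases i
          · exact hbα
          · exact haα
        have hr' : (chain T e H M α).rl 2 e ![b, a] :=
          ((succ_elem e H _ hInv).rl_iff 2 e ![b, a] hmem).mp hr
        exact c3 β hβα a ha b hbα hr'
      · have hβs : β = Order.succ α := le_antisymm hβ (Order.succ_le_of_lt (not_le.mp hβα))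
        subst hβs
        exact hb
  | limit α hlim IH =>
    intro hα
    have pw : ∀ (β γ : Ordinal) (hβ : β < α) (hγ : γ < α), β ≤ γ →
        Elem (chain T e H M β) (chain T e H M γ) :=
      fun β γ hβ hγ hle => (IH γ hγ (hγ.le.trans hα)).2.1 β γ hle le_rfl
    have hEl : ∀ β, β < α → Elem (chain T e H M β) (chain T e H M α) := by
      intro β hβ
      rw [chain_limit T e H M α hlim]
      exact limitStage_elem pw β hβ
    refine ⟨?_, ?_, ?_⟩
    · intro hαlt
      rw [chain_limit T e H M α hlim]
      show (⋃ β, ⋃ (_ : β < α), (chain T e H M β).car).Countable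
      refine Set.Countable.biUnion (Iio_countable hαlt) ?_
      intro β hβ
      have hβ' : β < α := hβ
      exact (IH β hβ' (hβ'.le.trans hα)).1 (lt_of_lt_of_le hβ' hα)
    · intro β γ hβγ hγ
      by_cases hγα : γ < α
      · exact (IH γ hγα (hγα.le.trans hα)).2.1 β γ hβγ le_rfl
      · have hγe : γ = α := le_antisymm hγ (not_lt.mp hγα)
        subst hγe
        rcases eq_or_lt_of_le hβγ with rfl | hβlt
        · exact Elem.refl _
        · exact hEl β hβlt
    · intro β hβ a ha b hb hr
      rcases eq_or_lt_of_le hβ with rfl | hβlt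
      · exact hb
      · have hb' := hb
        rw [chain_limit T e H M α hlim] at hb'
        obtain ⟨γ0, hγ0, hbγ0⟩ := limitStage_mem hb'
        have hδ : max β γ0 < α := max_lt hβlt hγ0
        have haδ : a ∈ (chain T e H M (max β γ0)).car :=
          (pw β _ hβlt hδ (le_max_left _ _)).sub ha
        have hbδ : b ∈ (chain T e H M (max β γ0)).car :=
          (pw γ0 _ hγ0 hδ (le_max_right _ _)).sub hbγ0
        have hmem : ∀ i, ![b, a] i ∈ (chain T e H M (max β γ0)).car := by
          intro i
          fin_cases i
          · exact hbδ
          · exact haδ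
        have hrδ : (chain T e H M (max β γ0)).rl 2 e ![b, a] :=
          ((hEl _ hδ).rl_iff 2 e ![b, a] hmem).mp hr
        exact (IH _ hδ (hδ.le.trans hα)).2.2 β (le_max_left _ _) a ha b hbδ hrδ

lemma chain_new (α : Ordinal.{0}) (hα : α < (Cardinal.aleph 1).ord) :
    ∃ x, x ∈ (chain T e H M (Order.succ α)).car ∧ x ∉ (chain T e H M α).car := by
  obtain ⟨c1, c2, _⟩ := chain_main T e H M α hα.le
  have hInv : Inv T (chain T e H M α) :=
    ⟨(c1 hα).to_subtype, (c2 0 α zero_le le_rfl).model_T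
      (by rw [chain_zero]; exact base_model T M)⟩
  rw [chain_succ]
  exact succ_new e H _ hInv

end Chain

end

end KeislerAux

namespace KeislerAux

/-- The universe-0 core of Keisler's theorem, step (a) to (b). -/
theorem core
    (L : FirstOrder.Language.{0, 0})
    (e : L.Relations 2) (T : L.Theory)
    (H : ∀ M : T.ModelType, Countable (M : Type) →
      ∃ (N : T.ModelType) (f : M ↪ₑ[L] N), Countable (N : Type) ∧
        ¬ Function.Surjective f ∧
        ∀ (a : M) (b : (N : Type)), RelMap e ![b, f a] → ∃ a' : M, f a' = b) :
    ∀ M : T.ModelType, Countable (M : Type) →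
      ∃ (N : T.ModelType) (f : M ↪ₑ[L] N),
        Cardinal.mk (N : Type) = Cardinal.aleph 1 ∧
        (∀ (a : M) (b : (N : Type)), RelMap e ![b, f a] → ∃ a' : M, f a' = b) ∧
        ∀ a : (N : Type), {b : (N : Type) | RelMap e ![b, a]}.Countable := by
  intro M hM
  haveI := hM
  obtain ⟨c1, c2, c3⟩ := chain_main T e H M ((Cardinal.aleph 1).ord) le_rfl
  have hlim : Order.IsSuccLimit ((Cardinal.aleph 1).ord) := Cardinal.isSuccLimit_ord aleph0_lt_aleph_one.le
  set s := chain T e H M ((Cardinal.aleph 1).ord) with hsdef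
  have hmod : T.Model ((s.car : Set Om) : Type) :=
    (c2 0 _ zero_le le_rfl).model_T
      (by rw [chain_zero]; exact base_model T M)
  have hEb : Elem (base T M) s := by
    have h := c2 0 _ zero_le le_rfl
    rwa [chain_zero] at h
  set fM : (M : Type) ↪ₑ[L] ((s.car : Set Om) : Type) :=
    hEb.emb.comp (ofEmbEquiv (g0 T M).injective).toElementaryEmbedding with hfM
  have hfval : ∀ m : (M : Type), ((fM m : ((s.car : Set Om) : Type)) : Om) = g0 T M m := by
    intro m
    have h1 : ((fM m : ((s.car : Set Om) : Type)) : Om)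
        = (((ofEmbEquiv (g0 T M).injective).toElementaryEmbedding m :
          (((base T M).car : Set Om) : Type)) : Om) := rfl
    rw [h1, Equiv.coe_toElementaryEmbedding]
    exact ofEmbEquiv_coe (g0 T M).injective m
  refine ⟨@Theory.ModelType.mk L T ((s.car : Set Om) : Type) (carStr s) hmod s.nonemp.to_subtype,
    fM, ?_, ?_, ?_⟩
  case _ =>
    -- cardinality
    have hcar : s.car = ⋃ β, ⋃ (_ : β < (Cardinal.aleph 1).ord), (chain T e H M β).car := by
      rw [hsdef, chain_limit T e H M _ hlim]
      rfl
    have hcar2 : s.car = ⋃ (x : ((Cardinal.aleph 1).ord).ToType),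
        (chain T e H M ((Ordinal.ToType.mk).symm x).val).car := by
      ext y
      rw [hcar]
      constructor
      · intro hy
        obtain ⟨β, hβ, h⟩ := mem_iUnion₂.mp hy
        refine mem_iUnion.mpr ⟨Ordinal.ToType.mk ⟨β, hβ⟩, ?_⟩
        have hval : (((Ordinal.ToType.mk (o := (Cardinal.aleph 1).ord)).symm
            (Ordinal.ToType.mk ⟨β, hβ⟩)) : Iio ((Cardinal.aleph 1).ord)).val = β := by
          simp
        rw [hval]
        exact h
      · intro hy
        obtain ⟨x, hx⟩ := mem_iUnion.mp hy
        exact mem_iUnion₂.mpr ⟨_, ((Ordinal.ToType.mk).symm x).2, hx⟩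
    have h1 : #(((Cardinal.aleph 1).ord).ToType) = Cardinal.aleph 1 := by
      rw [Cardinal.mk_toType, Cardinal.card_ord]
    have hup : #((s.car : Set Om) : Type) ≤ Cardinal.aleph 1 := by
      rw [hcar2]
      refine (Cardinal.mk_iUnion_le _).trans ?_
      have h2 : ⨆ x : ((Cardinal.aleph 1).ord).ToType,
          #(((chain T e H M ((Ordinal.ToType.mk).symm x).val).car : Set Om) : Type) ≤ ℵ₀ := by
        refine ciSup_le' fun x => ?_
        have hβ : ((Ordinal.ToType.mk).symm x).val < (Cardinal.aleph 1).ord :=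
          ((Ordinal.ToType.mk).symm x).2
        exact Cardinal.le_aleph0_iff_set_countable.mpr
          ((chain_main T e H M _ hβ.le).1 hβ)
      calc #(((Cardinal.aleph 1).ord).ToType) *
            ⨆ x, #(((chain T e H M ((Ordinal.ToType.mk).symm x).val).car : Set Om) : Type)
          ≤ Cardinal.aleph 1 * ℵ₀ := by
            rw [h1]
            exact mul_le_mul' le_rfl h2
        _ = Cardinal.aleph 1 :=
            Cardinal.mul_eq_left aleph0_lt_aleph_one.le aleph0_lt_aleph_one.le
              Cardinal.aleph0_ne_zero
    choose w hw1 hw2 using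
      fun β : Iio ((Cardinal.aleph 1).ord) => chain_new T e H M β.val β.2
    have hwmem : ∀ β : Iio ((Cardinal.aleph 1).ord), w β ∈ s.car := fun β =>
      (c2 (Order.succ β.val) _ (hlim.succ_lt β.2).le le_rfl).sub (hw1 β)
    have hFinj : Function.Injective (fun x : ((Cardinal.aleph 1).ord).ToType =>
        (⟨w ((Ordinal.ToType.mk).symm x), hwmem _⟩ : ((s.car : Set Om) : Type))) := by
      intro x y hxy
      have hval : w ((Ordinal.ToType.mk).symm x) = w ((Ordinal.ToType.mk).symm y) :=
        congrArg Subtype.val hxy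
      rcases lt_trichotomy (((Ordinal.ToType.mk).symm x).val)
        (((Ordinal.ToType.mk).symm y).val) with hlt | heq | hlt
      · exfalso
        have hmem2 : w ((Ordinal.ToType.mk).symm x) ∈
            (chain T e H M (((Ordinal.ToType.mk).symm y).val)).car :=
          (c2 (Order.succ (((Ordinal.ToType.mk).symm x).val)) _
            (Order.succ_le_of_lt hlt) ((Ordinal.ToType.mk).symm y).2.le).sub
            (hw1 ((Ordinal.ToType.mk).symm x))
        rw [hval] at hmem2
        exact hw2 ((Ordinal.ToType.mk).symm y) hmem2
      · exact (Ordinal.ToType.mk).symm.injective (Subtype.ext heq)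
      · exfalso
        have hmem2 : w ((Ordinal.ToType.mk).symm y) ∈
            (chain T e H M (((Ordinal.ToType.mk).symm x).val)).car :=
          (c2 (Order.succ (((Ordinal.ToType.mk).symm y).val)) _
            (Order.succ_le_of_lt hlt) ((Ordinal.ToType.mk).symm x).2.le).sub
            (hw1 ((Ordinal.ToType.mk).symm y))
        rw [← hval] at hmem2
        exact hw2 ((Ordinal.ToType.mk).symm x) hmem2
    have hlow : Cardinal.aleph 1 ≤ #((s.car : Set Om) : Type) := by
      rw [← h1]
      exact Cardinal.mk_le_of_injective hFinj
    exact le_antisymm hup hlow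
  case _ =>
    -- end extension over M
    intro a b hrel
    have hfmem : ((fM a :
        ((s.car : Set Om) : Type)) : Om) ∈ (chain T e H M 0).car := by
      rw [chain_zero, hfval a]
      exact mem_range_self _
    have hrl : s.rl 2 e ![(b : Om),
        ((fM a :
          ((s.car : Set Om) : Type)) : Om)] := by
      have h := (carStr_relMap s e
        ![b, fM a]).mp hrel
      have hco : (fun i =>
          ((![b, fM a] i :
            ((s.car : Set Om) : Type)) : Om))
          = ![(b : Om), ((fM a :
            ((s.car : Set Om) : Type)) : Om)] := by
        funext i
        fin_cases i <;> rfl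
      rwa [hco] at h
    have hb0 : (b : Om) ∈ (chain T e H M 0).car :=
      c3 0 zero_le _ hfmem (b : Om) b.2 hrl
    rw [chain_zero] at hb0
    obtain ⟨m, hm⟩ := hb0
    exact ⟨m, Subtype.ext (by rw [hfval m]; exact hm)⟩
  case _ =>
    -- ℵ₁-likeness
    intro a
    have hcar : s.car = ⋃ β, ⋃ (_ : β < (Cardinal.aleph 1).ord), (chain T e H M β).car := by
      rw [hsdef, chain_limit T e H M _ hlim]
      rfl
    have ha2 : (a : Om) ∈ ⋃ β, ⋃ (_ : β < (Cardinal.aleph 1).ord), (chain T e H M β).car := by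
      rw [← hcar]
      exact a.2
    obtain ⟨β, hβ, haβ⟩ := mem_iUnion₂.mp ha2
    have hcount : ((Subtype.val : ((s.car : Set Om) : Type) → Om) ⁻¹'
        (chain T e H M β).car).Countable :=
      ((chain_main T e H M β hβ.le).1 hβ).preimage Subtype.coe_injective
    refine Set.Countable.mono ?_ hcount
    intro b hb
    have h := (carStr_relMap s e ![b, a]).mp hb
    have hco : (fun i => ((![b, a] i : ((s.car : Set Om) : Type)) : Om))
        = ![(b : Om), (a : Om)] := by
      funext i
      fin_cases i <;> rfl
    rw [hco] at h
    exact c3 β hβ.le (a : Om) haβ (b : Om) b.2 h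

end KeislerAux

/-- Keisler's theorem, step from (a) to (b): if every countable model of a theory `T`
(in a countable language with a distinguished binary relation `e`) has a proper
countable elementary end extension, then every countable model of `T` has an
ℵ₁-like elementary end extension. -/
theorem aleph1_like_elementary_end_extension
    (L : FirstOrder.Language.{0, 0}) (hL : L.card ≤ Cardinal.aleph0)
    (e : L.Relations 2) (T : L.Theory)
    (H : ∀ M : T.ModelType, Countable M →
      ∃ (N : T.ModelType) (f : M ↪ₑ[L] N), Countable N ∧
        ¬ Function.Surjective f ∧
        ∀ (a : M) (b : (N : Type)), RelMap e ![b, f a] → ∃ a' : M, f a' = b) :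
    ∀ M : T.ModelType, Countable M →
      ∃ (N : T.ModelType) (f : M ↪ₑ[L] N),
        Cardinal.mk N = Cardinal.aleph 1 ∧
        (∀ (a : M) (b : (N : Type)), RelMap e ![b, f a] → ∃ a' : M, f a' = b) ∧
        ∀ a : (N : Type), {b : (N : Type) | RelMap e ![b, a]}.Countable := by
  intro M hM
  -- Transport the hypothesis down to universe 0 using `ULift`.
  have H0 : ∀ M0 : T.ModelType, Countable (M0 : Type) →
      ∃ (N : T.ModelType) (f : M0 ↪ₑ[L] N), Countable (N : Type) ∧
        ¬ Function.Surjective f ∧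
        ∀ (a : M0) (b : (N : Type)), RelMap e ![b, f a] → ∃ a' : M0, f a' = b := by
    intro M0 hc0
    haveI := hc0
    haveI hcu : Countable ((M0.ulift : T.ModelType) : Type _) := by
      show Countable (ULift (M0 : Type))
      infer_instance
    obtain ⟨N, f, hNc, hns, hend⟩ := H M0.ulift hcu
    let E : (M0 : Type) ≃[L] ((M0.ulift : T.ModelType) : Type _) :=
      Equiv.inducedStructureEquiv Equiv.ulift.symm
    refine ⟨N, f.comp E.toElementaryEmbedding, hNc, ?_, ?_⟩
    · intro hsurj
      apply hns
      intro b
      obtain ⟨x, hx⟩ := hsurj b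
      exact ⟨E x, hx⟩
    · intro a b hrel
      obtain ⟨a1, ha1⟩ := hend (E a) b hrel
      refine ⟨E.symm a1, ?_⟩
      show f (E (E.symm a1)) = b
      rw [E.apply_symm_apply]
      exact ha1
  -- Shrink `M` down to universe 0.
  haveI := hM
  haveI : Small.{0} (M : Type _) := inferInstance
  have hcs : Countable ((M.shrink : T.ModelType) : Type) := by
    show Countable (Shrink (M : Type _))
    exact Countable.of_equiv _ (equivShrink _)
  obtain ⟨N, f0, h1, h2, h3⟩ := KeislerAux.core L e T H0 M.shrink hcs
  let EM : (M : Type _) ≃[L] ((M.shrink : T.ModelType) : Type) :=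
    Equiv.inducedStructureEquiv (equivShrink _)
  refine ⟨N, f0.comp EM.toElementaryEmbedding, h1, ?_, h3⟩
  intro a b hrel
  obtain ⟨a1, ha1⟩ := h2 (EM a) b hrel
  refine ⟨EM.symm a1, ?_⟩
  show f0 (EM (EM.symm a1)) = b
  rw [EM.apply_symm_apply]
  exact ha1
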